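/- Let N ≥ 2, T ≥ 1 be integers, let 0 < ε < 1/N, η > 0 and 0 < ν ≤ 1, and let R_{η,ν}(p) = (1/η)·Σ_{i=1}^N p_i log p_i − (1/ν)·Σ_{i=1}^N log p_i. Let g_1, …, g_T ∈ ℝ^N be arbitrary vectors, and for t = 1, …, T+1 let p_t be a minimizer of Φ_t(p) = ⟨p, Σ_{s<t} g_s⟩ + R_{η,ν}(p) over the truncated simplex Δ_N^ε. Then for every p* ∈ Δ_N^ε there exist points z_1, …, z_T, with z_t on the line segment connecting p_t and p_{t+1}, such that Σ_{t=1}^T ⟨g_t, p_t − p*⟩ ≤ (N/ν)·log(1/ε) + (1/η)·log N + (η/2)·Σ_{t=1}^T Σ_{i=1}^N z_{t,i}·g_{t,i}². -/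

import Mathlib

open Finset

/-- The `ε`-truncated probability simplex in `ℝ^N`: vectors with all coordinates at least `ε`
summing to one. -/
def truncSimplex (N : ℕ) (ε : ℝ) : Set (Fin N → ℝ) :=
  {q | (∀ i, ε ≤ q i) ∧ ∑ i, q i = 1}

/-- The regularizer `R_{η,ν}(p) = (1/η)·∑ i, p i log (p i) − (1/ν)·∑ i, log (p i)`, the sum of a
negative-entropy component and a log-barrier component. -/
noncomputable def entLogBarrier (N : ℕ) (η ν : ℝ) (q : Fin N → ℝ) : ℝ :=
  (1 / η) * ∑ i, q i * Real.log (q i) - (1 / ν) * ∑ i, Real.log (q i)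

open Real Set Filter Topology

lemma aux_deriv_nonneg_of_min {φ : ℝ → ℝ} {c : ℝ} (hd : HasDerivAt φ c 0)
    (hmin : ∀ s ∈ Set.Icc (0:ℝ) 1, φ 0 ≤ φ s) : 0 ≤ c := by
  have h1 : HasDerivWithinAt φ c (Set.Ioi (0:ℝ)) 0 := hd.hasDerivWithinAt
  rw [hasDerivWithinAt_iff_tendsto_slope] at h1
  have hIoi : Set.Ioi (0:ℝ) \ {0} = Set.Ioi 0 := by
    simp [Set.diff_singleton_eq_self, Set.mem_Ioi]
  rw [hIoi] at h1
  refine ge_of_tendsto h1 ?_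
  have h2 : ∀ᶠ s in 𝓝[>] (0:ℝ), s < 1 := by
    apply eventually_nhdsWithin_of_eventually_nhds
    exact eventually_lt_nhds zero_lt_one
  filter_upwards [self_mem_nhdsWithin, h2] with s hs hs1
  have hs0 : (0:ℝ) < s := hs
  have := hmin s ⟨le_of_lt hs0, le_of_lt hs1⟩
  rw [slope_def_field]
  have : (0:ℝ) ≤ φ s - φ 0 := by linarith
  apply div_nonneg this (by linarith)

lemma aux_entropy_lb {N : ℕ} (hN : 1 ≤ N) (q : Fin N → ℝ) (hq : ∀ i, 0 < q i)
    (hsum : ∑ i, q i = 1) : -Real.log N ≤ ∑ i, q i * Real.log (q i) := by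
  have hN0 : (0:ℝ) < N := by exact_mod_cast Nat.lt_of_lt_of_le Nat.zero_lt_one hN
  have key : ∀ i, q i - 1/N ≤ q i * Real.log (N * q i) := by
    intro i
    have hx : (0:ℝ) < N * q i := mul_pos hN0 (hq i)
    have h1 := Real.log_le_sub_one_of_pos (inv_pos.mpr hx)
    rw [Real.log_inv] at h1
    have h2 : 1 - (N * q i)⁻¹ ≤ Real.log (N * q i) := by linarith
    have h3 := mul_le_mul_of_nonneg_left h2 (le_of_lt (hq i))
    calc q i - 1/N = q i * (1 - (N * q i)⁻¹) := by
          field_simp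
          rw [mul_sub, mul_one_div_cancel (hq i).ne']
        _ ≤ q i * Real.log (N * q i) := h3
  have hsum2 : (0:ℝ) ≤ ∑ i, q i * Real.log (N * q i) := by
    calc (0:ℝ) = ∑ i : Fin N, (q i - 1/N) := by
          rw [Finset.sum_sub_distrib, hsum]
          simp [Finset.card_univ]
          field_simp
          norm_num
        _ ≤ _ := Finset.sum_le_sum fun i _ => key i
  have expand : ∀ i, q i * Real.log (N * q i) = q i * Real.log N + q i * Real.log (q i) := by
    intro i
    rw [Real.log_mul (ne_of_gt hN0) (ne_of_gt (hq i))]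
    ring
  rw [Finset.sum_congr rfl (fun i _ => expand i), Finset.sum_add_distrib,
    ← Finset.sum_mul, hsum, one_mul] at hsum2
  linarith

lemma aux_taylor2 {φ φ' φ'' : ℝ → ℝ}
    (h1 : ∀ s ∈ Set.Icc (0:ℝ) 1, HasDerivAt φ (φ' s) s)
    (h2 : ∀ s ∈ Set.Icc (0:ℝ) 1, HasDerivAt φ' (φ'' s) s) :
    ∃ σ ∈ Set.Ioo (0:ℝ) 1, φ 1 = φ 0 + φ' 0 + φ'' σ / 2 := by
  set A : ℝ := φ 1 - φ 0 - φ' 0 with hA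
  set ψ : ℝ → ℝ := fun s => φ s - φ 0 - s * φ' 0 - A * s ^ 2 with hψ
  set ψ' : ℝ → ℝ := fun s => φ' s - φ' 0 - A * (2 * s) with hψ'
  have hψd : ∀ s ∈ Set.Icc (0:ℝ) 1, HasDerivAt ψ (ψ' s) s := by
    intro s hs
    have hpow : HasDerivAt (fun x : ℝ => A * x ^ 2) (A * (2 * s)) s := by
      simpa using (hasDerivAt_pow 2 s).const_mul A
    have hid : HasDerivAt (fun x : ℝ => x * φ' 0) (φ' 0) s := by
      simpa using (hasDerivAt_id s).mul_const (φ' 0)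
    exact (((h1 s hs).sub_const (φ 0)).sub hid).sub hpow
  have hψ'd : ∀ s ∈ Set.Icc (0:ℝ) 1, HasDerivAt ψ' (φ'' s - A * 2) s := by
    intro s hs
    have hlin : HasDerivAt (fun x : ℝ => A * (2 * x)) (A * 2) s := by
      simpa using ((hasDerivAt_id s).const_mul (2:ℝ)).const_mul A
    exact (((h2 s hs).sub_const (φ' 0)).sub hlin)
  have hψ0 : ψ 0 = 0 := by simp [hψ]
  have hψ1 : ψ 1 = 0 := by simp [hψ, hA]
  obtain ⟨σ₁, hσ₁, hσ₁0⟩ := exists_hasDerivAt_eq_zero zero_lt_one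
    (fun s hs => ((hψd s hs).continuousAt).continuousWithinAt) (hψ0.trans hψ1.symm)
    (fun x hx => hψd x (Set.mem_Icc_of_Ioo hx))
  have hψ'0 : ψ' 0 = 0 := by simp [hψ']
  have hsub : Set.Icc (0:ℝ) σ₁ ⊆ Set.Icc (0:ℝ) 1 :=
    Set.Icc_subset_Icc le_rfl (le_of_lt hσ₁.2)
  obtain ⟨σ, hσ, hσ0⟩ := exists_hasDerivAt_eq_zero hσ₁.1
    (fun s hs => ((hψ'd s (hsub hs)).continuousAt).continuousWithinAt)
    (hψ'0.trans hσ₁0.symm)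
    (fun x hx => hψ'd x (hsub (Set.mem_Icc_of_Ioo hx)))
  refine ⟨σ, ⟨hσ.1, lt_trans hσ.2 hσ₁.2⟩, ?_⟩
  have : A = φ'' σ / 2 := by linarith
  rw [hA] at this
  linarith

noncomputable def auxPhi {N : ℕ} (η ν : ℝ) (L a d : Fin N → ℝ) : ℝ → ℝ := fun s =>
  ∑ i, ((a i + s * d i) * L i + (1/η) * ((a i + s * d i) * Real.log (a i + s * d i))
      - (1/ν) * Real.log (a i + s * d i))

noncomputable def auxPhi' {N : ℕ} (η ν : ℝ) (L a d : Fin N → ℝ) : ℝ → ℝ := fun s =>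
  ∑ i, (d i * L i + (1/η) * ((Real.log (a i + s * d i) + 1) * d i)
      - (1/ν) * (d i * (a i + s * d i)⁻¹))

noncomputable def auxPhi'' {N : ℕ} (η ν : ℝ) (L a d : Fin N → ℝ) : ℝ → ℝ := fun s =>
  ∑ i, ((0:ℝ) + (1/η) * (d i * (a i + s * d i)⁻¹ * d i)
      - (1/ν) * (d i * (-d i / (a i + s * d i) ^ 2)))

lemma auxPhi_deriv {N : ℕ} (η ν : ℝ) (L a d : Fin N → ℝ) (s : ℝ)
    (hne : ∀ i, a i + s * d i ≠ 0) :
    HasDerivAt (auxPhi η ν L a d) (auxPhi' η ν L a d s) s := by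
  unfold auxPhi auxPhi'
  apply HasDerivAt.fun_sum
  intro i _
  have hU : HasDerivAt (fun t : ℝ => a i + t * d i) (d i) s := by
    simpa using ((hasDerivAt_id s).mul_const (d i)).const_add (a i)
  have t1 : HasDerivAt (fun t : ℝ => (a i + t * d i) * L i) (d i * L i) s := hU.mul_const (L i)
  have t2 : HasDerivAt (fun t : ℝ => (a i + t * d i) * Real.log (a i + t * d i))
      ((Real.log (a i + s * d i) + 1) * d i) s :=
    by have := (Real.hasDerivAt_mul_log (hne i)).comp s hU; exact this
  have t3 : HasDerivAt (fun t : ℝ => Real.log (a i + t * d i)) (d i * (a i + s * d i)⁻¹) s := by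
    simpa [div_eq_mul_inv] using hU.log (hne i)
  exact (t1.add (t2.const_mul (1/η))).sub (t3.const_mul (1/ν))

lemma auxPhi'_deriv {N : ℕ} (η ν : ℝ) (L a d : Fin N → ℝ) (s : ℝ)
    (hne : ∀ i, a i + s * d i ≠ 0) :
    HasDerivAt (auxPhi' η ν L a d) (auxPhi'' η ν L a d s) s := by
  unfold auxPhi' auxPhi''
  apply HasDerivAt.fun_sum
  intro i _
  have hU : HasDerivAt (fun t : ℝ => a i + t * d i) (d i) s := by
    simpa using ((hasDerivAt_id s).mul_const (d i)).const_add (a i)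
  have c1 : HasDerivAt (fun _ : ℝ => d i * L i) 0 s := hasDerivAt_const s _
  have t3 : HasDerivAt (fun t : ℝ => Real.log (a i + t * d i)) (d i * (a i + s * d i)⁻¹) s := by
    simpa [div_eq_mul_inv] using hU.log (hne i)
  have c2 : HasDerivAt (fun t : ℝ => (Real.log (a i + t * d i) + 1) * d i)
      (d i * (a i + s * d i)⁻¹ * d i) s := (t3.add_const 1).mul_const (d i)
  have c3 : HasDerivAt (fun t : ℝ => d i * (a i + t * d i)⁻¹)
      (d i * (-d i / (a i + s * d i) ^ 2)) s := (hU.inv (hne i)).const_mul (d i)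
  exact (c1.add (c2.const_mul (1/η))).sub (c3.const_mul (1/ν))

lemma aux_step {N : ℕ} {η ν ε : ℝ} (hη : 0 < η) (hν : 0 < ν) (hε : 0 < ε)
    (L gv a b : Fin N → ℝ)
    (ha : a ∈ truncSimplex N ε) (hb : b ∈ truncSimplex N ε)
    (hmin : ∀ q ∈ truncSimplex N ε,
      (∑ i, a i * L i) + entLogBarrier N η ν a ≤ (∑ i, q i * L i) + entLogBarrier N η ν q) :
    ∃ z ∈ segment ℝ a b,
      (∑ i, (a i - b i) * gv i)
        + (((∑ i, a i * L i) + entLogBarrier N η ν a)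
            - ((∑ i, b i * L i) + entLogBarrier N η ν b))
        ≤ (η / 2) * ∑ i, z i * gv i ^ 2 := by
  classical
  set d : Fin N → ℝ := fun i => b i - a i with hd
  have hu : ∀ s ∈ Set.Icc (0:ℝ) 1, ∀ i, ε ≤ a i + s * d i := by
    intro s hs i
    have h1 := ha.1 i
    have h2 := hb.1 i
    have : a i + s * d i = (1 - s) * a i + s * b i := by rw [hd]; ring
    rw [this]
    nlinarith [hs.1, hs.2]
  have hne : ∀ s ∈ Set.Icc (0:ℝ) 1, ∀ i, a i + s * d i ≠ 0 :=
    fun s hs i => ne_of_gt (lt_of_lt_of_le hε (hu s hs i))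
  have huK : ∀ s ∈ Set.Icc (0:ℝ) 1, (fun i => a i + s * d i) ∈ truncSimplex N ε := by
    intro s hs
    refine ⟨hu s hs, ?_⟩
    have : ∑ i, (a i + s * d i) = (∑ i, a i) + s * ((∑ i, b i) - ∑ i, a i) := by
      rw [Finset.sum_add_distrib, ← Finset.mul_sum, hd, Finset.sum_sub_distrib]
    rw [this, ha.2, hb.2]; ring
  -- φ s equals the objective at the point on the segment
  have hφeq : ∀ s : ℝ, auxPhi η ν L a d s
      = (∑ i, (a i + s * d i) * L i) + entLogBarrier N η ν (fun i => a i + s * d i) := by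
    intro s
    unfold auxPhi entLogBarrier
    rw [Finset.mul_sum, Finset.mul_sum, ← Finset.sum_sub_distrib, ← Finset.sum_add_distrib]
    exact Finset.sum_congr rfl fun i _ => by simp only []; ring
  have hφ0 : auxPhi η ν L a d 0 = (∑ i, a i * L i) + entLogBarrier N η ν a := by
    rw [hφeq 0]
    norm_num
  have hφ1 : auxPhi η ν L a d 1 = (∑ i, b i * L i) + entLogBarrier N η ν b := by
    rw [hφeq 1]
    have : (fun i => a i + 1 * d i) = b := by funext i; rw [hd]; ring
    rw [this]
    congr 1
    apply Finset.sum_congr rfl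
    intro i _
    rw [hd]; ring_nf
  -- second-order expansion
  obtain ⟨σ, hσ, hexp⟩ := aux_taylor2
    (fun s hs => auxPhi_deriv η ν L a d s (hne s hs))
    (fun s hs => auxPhi'_deriv η ν L a d s (hne s hs))
  have hσI : σ ∈ Set.Icc (0:ℝ) 1 := Set.mem_Icc_of_Ioo hσ
  -- first-order optimality
  have hd0 : 0 ≤ auxPhi' η ν L a d 0 := by
    apply aux_deriv_nonneg_of_min (auxPhi_deriv η ν L a d 0 (hne 0 (Set.left_mem_Icc.mpr zero_le_one)))
    intro s hs
    rw [hφ0, hφeq s]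
    exact hmin _ (huK s hs)
  set z : Fin N → ℝ := fun i => a i + σ * d i with hz
  have hzpos : ∀ i, 0 < z i := fun i => lt_of_lt_of_le hε (hu σ hσI i)
  refine ⟨z, ?_, ?_⟩
  · rw [segment_eq_image]
    exact ⟨σ, hσI, by funext i; simp [hz, hd, smul_eq_mul]; ring⟩
  -- the quadratic bound
  have hφ''lb : ∑ i, d i ^ 2 / (η * z i) ≤ auxPhi'' η ν L a d σ := by
    unfold auxPhi''
    apply Finset.sum_le_sum
    intro i _
    have hw : 0 < z i := hzpos i
    have e1 : (1/η) * (d i * (a i + σ * d i)⁻¹ * d i) = d i ^ 2 / (η * z i) := by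
      rw [hz]
      field_simp
    have e2 : d i * (-d i / (a i + σ * d i) ^ 2) = -(d i ^ 2 / z i ^ 2) := by
      rw [hz]; ring
    rw [e1, e2]
    have : 0 ≤ (1/ν) * (d i ^ 2 / z i ^ 2) := by positivity
    linarith
  have key : ∀ i, -(d i) * gv i - d i ^ 2 / (η * z i) / 2 ≤ (η / 2) * (z i * gv i ^ 2) := by
    intro i
    have hw : 0 < z i := hzpos i
    have hpos : 0 < η * z i := mul_pos hη hw
    have e : (η / 2) * (z i * gv i ^ 2) + d i * gv i + d i ^ 2 / (η * z i) / 2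
        = (d i + η * z i * gv i) ^ 2 / (2 * (η * z i)) := by
      field_simp
      ring
    have h0 : 0 ≤ (d i + η * z i * gv i) ^ 2 / (2 * (η * z i)) := by positivity
    nlinarith [h0, e]
  have hsum_key : ∑ i, (-(d i) * gv i - d i ^ 2 / (η * z i) / 2)
      ≤ ∑ i, (η / 2) * (z i * gv i ^ 2) := Finset.sum_le_sum fun i _ => key i
  have hexp' : ((∑ i, a i * L i) + entLogBarrier N η ν a)
      - ((∑ i, b i * L i) + entLogBarrier N η ν b)
      = -(auxPhi' η ν L a d 0) - auxPhi'' η ν L a d σ / 2 := by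
    rw [← hφ0, ← hφ1, hexp]; ring
  rw [hexp']
  have lhs_eq : (∑ i, (a i - b i) * gv i) = ∑ i, -(d i) * gv i := by
    apply Finset.sum_congr rfl
    intro i _
    rw [hd]; ring
  rw [lhs_eq]
  have rhs_eq : (η / 2) * ∑ i, z i * gv i ^ 2 = ∑ i, (η / 2) * (z i * gv i ^ 2) :=
    Finset.mul_sum _ _ _
  rw [rhs_eq]
  have hbig : ∑ i, -(d i) * gv i - auxPhi'' η ν L a d σ / 2
      ≤ ∑ i, (η / 2) * (z i * gv i ^ 2) := by
    calc ∑ i, -(d i) * gv i - auxPhi'' η ν L a d σ / 2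
        ≤ ∑ i, -(d i) * gv i - (∑ i, d i ^ 2 / (η * z i)) / 2 := by linarith
      _ = ∑ i, (-(d i) * gv i - d i ^ 2 / (η * z i) / 2) := by
          rw [Finset.sum_sub_distrib, ← Finset.sum_div]
      _ ≤ _ := hsum_key
  linarith
theorem ftrl_log_barrier_regret {N : ℕ} (hN : 2 ≤ N) (T : ℕ) (hT : 1 ≤ T)
    (ε η ν : ℝ) (hε0 : 0 < ε) (hε1 : ε < 1 / N) (hη : 0 < η) (hν0 : 0 < ν) (hν1 : ν ≤ 1)
    (g : ℕ → Fin N → ℝ) (p : ℕ → Fin N → ℝ)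
    (hp : ∀ t ≤ T, p t ∈ truncSimplex N ε ∧ ∀ q ∈ truncSimplex N ε,
      (∑ i, p t i * ∑ s ∈ Finset.range t, g s i) + entLogBarrier N η ν (p t)
        ≤ (∑ i, q i * ∑ s ∈ Finset.range t, g s i) + entLogBarrier N η ν q)
    (pstar : Fin N → ℝ) (hps : pstar ∈ truncSimplex N ε) :
    ∃ z : ℕ → Fin N → ℝ,
      (∀ t < T, z t ∈ segment ℝ (p t) (p (t + 1))) ∧
      ∑ t ∈ Finset.range T, ∑ i, g t i * (p t i - pstar i)
        ≤ (N / ν) * Real.log (1 / ε) + (1 / η) * Real.log N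
          + (η / 2) * ∑ t ∈ Finset.range T, ∑ i, z t i * (g t i) ^ 2 := by
  classical
  set Lf : ℕ → Fin N → ℝ := fun t i => ∑ s ∈ Finset.range t, g s i with hLf
  set R : (Fin N → ℝ) → ℝ := fun q => entLogBarrier N η ν q with hR
  set F : ℕ → ℝ := fun t => (∑ i, p t i * Lf t i) + R (p t) with hF
  set D : ℕ → ℝ := fun t => (∑ i, (p t i - p (t+1) i) * g t i)
      + (((∑ i, p t i * Lf t i) + R (p t)) - ((∑ i, p (t+1) i * Lf t i) + R (p (t+1)))) with hD
  -- basic facts about membership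
  have hq01 : ∀ q ∈ truncSimplex N ε, ∀ i, 0 < q i ∧ q i ≤ 1 := by
    intro q hq i
    refine ⟨lt_of_lt_of_le hε0 (hq.1 i), ?_⟩
    calc q i ≤ ∑ j, q j :=
          Finset.single_le_sum (fun j _ => le_trans hε0.le (hq.1 j)) (Finset.mem_univ i)
      _ = 1 := hq.2
  -- step bounds via aux_step
  have hstep : ∀ t, ∃ zt : Fin N → ℝ, t < T →
      zt ∈ segment ℝ (p t) (p (t+1)) ∧
      D t ≤ (η / 2) * ∑ i, zt i * g t i ^ 2 := by
    intro t
    by_cases ht : t < T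
    · obtain ⟨zt, hz1, hz2⟩ := aux_step hη hν0 hε0 (Lf t) (g t) (p t) (p (t+1))
        (hp t ht.le).1 (hp (t+1) ht).1 (hp t ht.le).2
      exact ⟨zt, fun _ => ⟨hz1, hz2⟩⟩
    · exact ⟨p t, fun h => absurd h ht⟩
  choose z hz using hstep
  refine ⟨z, fun t ht => (hz t ht).1, ?_⟩
  -- algebraic identity per round
  have hsplit : ∀ (q : Fin N → ℝ) (t : ℕ),
      ∑ i, q i * Lf (t+1) i = (∑ i, q i * Lf t i) + ∑ i, q i * g t i := by
    intro q t
    rw [← Finset.sum_add_distrib]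
    refine Finset.sum_congr rfl fun i _ => ?_
    simp only [hLf, Finset.sum_range_succ]
    ring
  have eq_t : ∀ t, (∑ i, g t i * (p t i - pstar i))
      = D t + (F (t+1) - F t) - ∑ i, pstar i * g t i := by
    intro t
    have h1 : ∑ i, g t i * (p t i - pstar i)
        = (∑ i, p t i * g t i) - ∑ i, pstar i * g t i := by
      rw [← Finset.sum_sub_distrib]
      exact Finset.sum_congr rfl fun i _ => by ring
    have h2 : ∑ i, (p t i - p (t+1) i) * g t i
        = (∑ i, p t i * g t i) - ∑ i, p (t+1) i * g t i := by
      rw [← Finset.sum_sub_distrib]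
      exact Finset.sum_congr rfl fun i _ => by ring
    have h3 := hsplit (p (t+1)) t
    simp only [hD, hF]
    rw [h1, h2, h3]
    ring
  -- telescoping
  have htel : ∑ t ∈ Finset.range T, ∑ i, g t i * (p t i - pstar i)
      = (∑ t ∈ Finset.range T, D t) + (F T - F 0)
        - ∑ t ∈ Finset.range T, ∑ i, pstar i * g t i := by
    rw [← Finset.sum_range_sub (fun t => F t)]
    rw [← Finset.sum_add_distrib, ← Finset.sum_sub_distrib]
    exact Finset.sum_congr rfl fun t _ => eq_t t
  -- pstar cumulative loss
  have hpsum : ∑ t ∈ Finset.range T, ∑ i, pstar i * g t i = ∑ i, pstar i * Lf T i := by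
    rw [Finset.sum_comm]
    refine Finset.sum_congr rfl fun i _ => ?_
    rw [← Finset.mul_sum]
  -- F T bounded by pstar objective
  have hFT : F T ≤ (∑ i, pstar i * Lf T i) + R pstar := (hp T le_rfl).2 pstar hps
  -- F 0 = R (p 0)
  have hF0 : F 0 = R (p 0) := by
    simp [hF, hLf]
  -- bound R pstar
  have hRps : R pstar ≤ (N / ν) * Real.log (1 / ε) := by
    have hent : ∑ i, pstar i * Real.log (pstar i) ≤ 0 := by
      apply Finset.sum_nonpos
      intro i _
      have h := hq01 pstar hps i
      exact mul_nonpos_of_nonneg_of_nonpos h.1.le (Real.log_nonpos h.1.le h.2)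
    have hlog : (N : ℝ) * Real.log ε ≤ ∑ i, Real.log (pstar i) := by
      calc (N : ℝ) * Real.log ε = ∑ _i : Fin N, Real.log ε := by
            simp [Finset.card_univ]
        _ ≤ ∑ i, Real.log (pstar i) :=
            Finset.sum_le_sum fun i _ => Real.log_le_log hε0 (hps.1 i)
    have h1 : (1 / η) * ∑ i, pstar i * Real.log (pstar i) ≤ 0 :=
      mul_nonpos_of_nonneg_of_nonpos (by positivity) hent
    have h2 : -((1 / ν) * ∑ i, Real.log (pstar i)) ≤ (N / ν) * Real.log (1 / ε) := by
      have h3 : -((1 / ν) * ∑ i, Real.log (pstar i)) ≤ -((1 / ν) * ((N : ℝ) * Real.log ε)) := by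
        have := mul_le_mul_of_nonneg_left hlog (le_of_lt (by positivity : (0:ℝ) < 1 / ν))
        linarith
      calc -((1 / ν) * ∑ i, Real.log (pstar i)) ≤ -((1 / ν) * ((N : ℝ) * Real.log ε)) := h3
        _ = (N / ν) * Real.log (1 / ε) := by
            have hlinv : Real.log (1 / ε) = -Real.log ε := by
              rw [one_div, Real.log_inv]
            rw [hlinv]; ring
    simp only [hR, entLogBarrier]
    linarith
  -- bound -R (p 0)
  have hRp0 : -(R (p 0)) ≤ (1 / η) * Real.log N := by
    have hmem0 := (hp 0 (Nat.zero_le T)).1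
    have hent : -Real.log N ≤ ∑ i, p 0 i * Real.log (p 0 i) :=
      aux_entropy_lb (by omega) (p 0) (fun i => (hq01 (p 0) hmem0 i).1) hmem0.2
    have hlog : ∑ i, Real.log (p 0 i) ≤ 0 := by
      apply Finset.sum_nonpos
      intro i _
      have h := hq01 (p 0) hmem0 i
      exact Real.log_nonpos h.1.le h.2
    have h1 : (1 / η) * (-Real.log N) ≤ (1 / η) * ∑ i, p 0 i * Real.log (p 0 i) :=
      mul_le_mul_of_nonneg_left hent (by positivity)
    have h2 : (1 / ν) * ∑ i, Real.log (p 0 i) ≤ 0 :=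
      mul_nonpos_of_nonneg_of_nonpos (by positivity) hlog
    simp only [hR, entLogBarrier]
    nlinarith
  -- sum of step bounds
  have hDsum : ∑ t ∈ Finset.range T, D t
      ≤ (η / 2) * ∑ t ∈ Finset.range T, ∑ i, z t i * g t i ^ 2 := by
    rw [Finset.mul_sum]
    exact Finset.sum_le_sum fun t ht => (hz t (Finset.mem_range.mp ht)).2
  rw [htel, hpsum, hF0]
  clear_value Lf R F D
  linarith
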